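/- arXiv:0710.0706 — 2 statements merged into one kernel-verified Lean document; each statement's English description precedes it below -/
import Mathlib

section
/- Let σ : A → A be a nontrivial continuous endomorphism of A = ℂ⟦z₁,z₂⟧ with decomposition (g,h₁,h₂), and suppose some prime element p dividing g is of type II relative to σ. Then for every n ≥ 1 there exist (necessarily unique, since A is a domain and g ≠ 0) elements h_{n1}, h_{n2} ∈ A with σⁿ(zᵢ) = zᵢ + g·h_{ni} for i = 1,2; moreover h_{n1} and h_{n2} are relatively prime, (h_{n1}, h_{n2}) = (h₁, h₂) as ideals of A, and h_{ni} − n·hᵢ ∈ (p)·(h₁,h₂) for i = 1,2. -/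
noncomputable section

/-- `A` is the ring `ℂ⟦z₁,z₂⟧` of formal power series in two variables over `ℂ`. -/
abbrev A : Type := MvPowerSeries (Fin 2) ℂ

/-- The variables `z₁`, `z₂` (indexed by `Fin 2`). -/
def z (i : Fin 2) : A := MvPowerSeries.X i

/-- The maximal ideal `𝔪 = (z₁, z₂)` of `A`, i.e. the power series with zero constant term. -/
def mA : Ideal A := RingHom.ker (MvPowerSeries.constantCoeff : A →+* ℂ)

/-- A map `σ : A → A` is continuous (for the `𝔪`-adic topology) iff `σ 𝔪 ⊆ 𝔪`. -/
def ContEndo (σ : A → A) : Prop := ∀ f ∈ mA, σ f ∈ mA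

/-- `(g, h₁, h₂)` is a decomposition of `σ`: `g ≠ 0`, `h₁, h₂` relatively prime and
`σ zᵢ = zᵢ + g·hᵢ`. -/
def IsDecomposition (σ : A → A) (g h₁ h₂ : A) : Prop :=
  g ≠ 0 ∧ IsRelPrime h₁ h₂ ∧ σ (z 0) = z 0 + g * h₁ ∧ σ (z 1) = z 1 + g * h₂

/-- The formal partial derivative `∂f/∂zᵢ`. -/
def pd (i : Fin 2) (f : A) : A :=
  fun m => ((m i : ℕ) + 1 : ℂ) * MvPowerSeries.coeff (m + Finsupp.single i 1) f

/-- A prime element `p` (dividing `g`) is of type II relative to a decomposition `(g,h₁,h₂)`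
if `h₁ = -a·(∂p/∂z₂) + p·q₁` and `h₂ = a·(∂p/∂z₁) + p·q₂` for some `a, q₁, q₂`. -/
def IsTypeII (p h₁ h₂ : A) : Prop :=
  ∃ a q₁ q₂ : A, h₁ = -a * pd 1 p + p * q₁ ∧ h₂ = a * pd 0 p + p * q₂

/-- `multOrd p x = max { m : ℕ | x ∈ (p)^m }`. -/
def multOrd (p x : A) : ℕ := sSup {m : ℕ | x ∈ Ideal.span {p} ^ m}

namespace S4

open MvPowerSeries Finsupp

abbrev M : Type := Fin 2 →₀ ℕ

/-- total degree of an exponent -/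
def md (d : M) : ℕ := d 0 + d 1

lemma md_add (a b : M) : md (a + b) = md a + md b := by
  simp [md, Finsupp.add_apply]; ring

lemma md_single (i : Fin 2) (k : ℕ) : md (Finsupp.single i k) = k := by
  fin_cases i <;> simp [md]

lemma fin2_decomp (d : M) : d = Finsupp.single 0 (d 0) + Finsupp.single 1 (d 1) := by
  ext i; fin_cases i <;> simp [Finsupp.add_apply]

lemma md_eq_zero {d : M} (h : md d = 0) : d = 0 := by
  have h0 : d 0 = 0 := by unfold md at h; omega
  have h1 : d 1 = 0 := by unfold md at h; omega
  ext i; fin_cases i <;> simp [h0, h1]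

/-! ## The order predicate `OG n f` : all coefficients in degree `< n` vanish -/

def OG (n : ℕ) (f : A) : Prop := ∀ d : M, md d < n → MvPowerSeries.coeff d f = 0

lemma OG_zero (n : ℕ) : OG n 0 := fun d _ => by simp

lemma OG_of_le {m n : ℕ} (h : m ≤ n) {f : A} (hf : OG n f) : OG m f :=
  fun d hd => hf d (lt_of_lt_of_le hd h)

lemma OG_add {n : ℕ} {f g : A} (hf : OG n f) (hg : OG n g) : OG n (f + g) := by
  intro d hd; rw [map_add, hf d hd, hg d hd, add_zero]

lemma OG_sub {n : ℕ} {f g : A} (hf : OG n f) (hg : OG n g) : OG n (f - g) := by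
  intro d hd; rw [map_sub, hf d hd, hg d hd, sub_zero]

lemma OG_neg {n : ℕ} {f : A} (hf : OG n f) : OG n (-f) := by
  intro d hd; rw [map_neg, hf d hd, neg_zero]

lemma OG_smul {n : ℕ} (c : ℂ) {f : A} (hf : OG n f) : OG n (c • f) := by
  intro d hd; rw [map_smul, hf d hd, smul_zero]

lemma OG_mul {a b : ℕ} {f g : A} (hf : OG a f) (hg : OG b g) : OG (a + b) (f * g) := by
  intro d hd
  rw [coeff_mul]
  apply Finset.sum_eq_zero
  intro p hp
  rw [Finset.HasAntidiagonal.mem_antidiagonal] at hp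
  have : md p.1 + md p.2 < a + b := by rw [← md_add, hp]; exact hd
  rcases lt_or_ge (md p.1) a with h | h
  · rw [hf p.1 h, zero_mul]
  · rw [hg p.2 (by omega), mul_zero]

lemma OG_mul_left {b : ℕ} (f : A) {g : A} (hg : OG b g) : OG b (f * g) := by
  have h0 : OG 0 f := fun d hd => absurd hd (by omega)
  have := OG_mul h0 hg
  simpa using this

/-! ## `OG` and powers of the maximal ideal -/

lemma mem_mA_iff {f : A} : f ∈ mA ↔ MvPowerSeries.coeff 0 f = 0 := by
  rw [mA, RingHom.mem_ker, ← MvPowerSeries.coeff_zero_eq_constantCoeff_apply]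

lemma OG_one_iff {f : A} : OG 1 f ↔ f ∈ mA := by
  rw [mem_mA_iff]
  constructor
  · intro h; exact h 0 (by simp [md])
  · intro h d hd
    have : d = 0 := md_eq_zero (by omega)
    rwa [this]

lemma z_mem_mA (i : Fin 2) : z i ∈ mA := by
  rw [mem_mA_iff, z, MvPowerSeries.coeff_zero_eq_constantCoeff_apply, constantCoeff_X]

/-- the set of series of order at least `n`, as an ideal. -/
def OGideal (n : ℕ) : Ideal A where
  carrier := {f | OG n f}
  add_mem' := OG_add
  zero_mem' := OG_zero n
  smul_mem' := fun c _ h => by simpa [smul_eq_mul] using OG_mul_left c h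

lemma OG_of_mem_pow {n : ℕ} {f : A} (hf : f ∈ mA ^ n) : OG n f := by
  suffices h : mA ^ n ≤ OGideal n from h hf
  clear hf f
  induction n with
  | zero => intro f _; intro d hd; omega
  | succ n ih =>
    rw [pow_succ]
    apply Ideal.mul_le.mpr
    intro r hr s hs
    have := OG_mul (ih hr) (OG_one_iff.mpr hs)
    exact this

/-! ## order `≥ n` implies membership in `mA ^ n` -/

/-- divide by `X i`, dropping coefficients not divisible by `X i`. -/
def shiftSub (i : Fin 2) (f : A) : A := fun m => MvPowerSeries.coeff (m + Finsupp.single i 1) f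

lemma coeff_shiftSub (i : Fin 2) (f : A) (m : M) :
    MvPowerSeries.coeff m (shiftSub i f) = MvPowerSeries.coeff (m + Finsupp.single i 1) f := rfl

lemma coeff_X_mul (i : Fin 2) (f : A) (m : M) :
    MvPowerSeries.coeff m (MvPowerSeries.X i * f) =
      if Finsupp.single i 1 ≤ m then MvPowerSeries.coeff (m - Finsupp.single i 1) f else 0 := by
  rw [X_def, coeff_monomial_mul]
  split <;> simp

lemma OG_shiftSub {n : ℕ} {f : A} (i : Fin 2) (hf : OG (n + 1) f) : OG n (shiftSub i f) := by
  intro d hd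
  rw [coeff_shiftSub]
  exact hf _ (by rw [md_add, md_single]; omega)

lemma decompose_OG {n : ℕ} {f : A} (hf : OG (n + 1) f) :
    ∃ a b : A, OG n a ∧ OG n b ∧ f = MvPowerSeries.X 0 * a + MvPowerSeries.X 1 * b := by
  refine ⟨shiftSub 0 f, shiftSub 1 (f - MvPowerSeries.X 0 * shiftSub 0 f), OG_shiftSub 0 hf,
    OG_shiftSub 1 ?_, ?_⟩
  · intro d hd
    rw [map_sub, coeff_X_mul]
    split_ifs with h
    · rw [coeff_shiftSub, tsub_add_cancel_of_le h, sub_self]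
    · rw [sub_zero]; exact hf d hd
  · ext m
    rw [map_add, coeff_X_mul, coeff_X_mul]
    by_cases h0 : Finsupp.single (0 : Fin 2) 1 ≤ m
    · rw [if_pos h0, coeff_shiftSub, tsub_add_cancel_of_le h0]
      by_cases h1 : Finsupp.single (1 : Fin 2) 1 ≤ m
      · rw [if_pos h1, coeff_shiftSub, tsub_add_cancel_of_le h1, map_sub, coeff_X_mul,
          if_pos h0, coeff_shiftSub, tsub_add_cancel_of_le h0]
        ring
      · rw [if_neg h1, add_zero]
    · rw [if_neg h0, zero_add]
      by_cases h1 : Finsupp.single (1 : Fin 2) 1 ≤ m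
      · rw [if_pos h1, coeff_shiftSub, tsub_add_cancel_of_le h1, map_sub, coeff_X_mul,
          if_neg h0, sub_zero]
      · rw [if_neg h1]
        have hm : m = 0 := by
          rw [Finsupp.single_le_iff, not_le] at h0 h1
          ext i; fin_cases i <;> simp <;> omega
        rw [hm]
        exact hf 0 (by simp [md])

lemma mem_pow_of_OG : ∀ {n : ℕ} {f : A}, OG n f → f ∈ mA ^ n := by
  intro n
  induction n with
  | zero => intro f _; rw [pow_zero, Ideal.one_eq_top]; trivial
  | succ n ih =>
    intro f hf
    obtain ⟨a, b, ha, hb, hab⟩ := decompose_OG hf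
    rw [hab, pow_succ]
    refine Ideal.add_mem _ ?_ ?_
    · rw [mul_comm (MvPowerSeries.X 0) a]
      exact Ideal.mul_mem_mul (ih ha) (z_mem_mA 0)
    · rw [mul_comm (MvPowerSeries.X 1) b]
      exact Ideal.mul_mem_mul (ih hb) (z_mem_mA 1)

/-! ## facts about `pd` -/

lemma coeff_pd (i : Fin 2) (f : A) (m : M) :
    MvPowerSeries.coeff m (pd i f) =
      ((m i : ℕ) + 1 : ℂ) * MvPowerSeries.coeff (m + Finsupp.single i 1) f := rfl

lemma pd_add (i : Fin 2) (f g : A) : pd i (f + g) = pd i f + pd i g := by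
  ext m
  rw [map_add, coeff_pd, coeff_pd, coeff_pd, map_add]
  ring

lemma pd_smul (i : Fin 2) (c : ℂ) (f : A) : pd i (c • f) = c • pd i f := by
  ext m
  rw [coeff_pd, map_smul, map_smul, coeff_pd, smul_eq_mul, smul_eq_mul]
  ring

lemma pd_one (i : Fin 2) : pd i (1 : A) = 0 := by
  ext m
  rw [coeff_pd]
  have : (m + Finsupp.single i 1) ≠ 0 := by
    intro h
    have := DFunLike.congr_fun h i
    simp [Finsupp.add_apply] at this
  rw [MvPowerSeries.coeff_one, if_neg this, mul_zero, map_zero]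

lemma pd_X (i j : Fin 2) : pd i (MvPowerSeries.X j : A) = if i = j then 1 else 0 := by
  by_cases h : i = j
  · subst h
    rw [if_pos rfl]
    ext m
    rw [coeff_pd, MvPowerSeries.coeff_X, MvPowerSeries.coeff_one]
    have hiff : (m + Finsupp.single i 1 = Finsupp.single i 1) ↔ m = 0 := by
      constructor
      · intro he
        simpa using add_right_cancel (he.trans (zero_add _).symm)
      · intro hm; rw [hm, zero_add]
    by_cases hm : m = 0
    · rw [if_pos (hiff.mpr hm), if_pos hm, hm]
      simp
    · rw [if_neg (fun he => hm (hiff.mp he)), if_neg hm, mul_zero]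
  · rw [if_neg h]
    ext m
    have hne : m + Finsupp.single i 1 ≠ Finsupp.single j 1 := by
      intro he
      have := DFunLike.congr_fun he i
      simp [Finsupp.add_apply, Finsupp.single_apply, Ne.symm h] at this
    rw [coeff_pd, MvPowerSeries.coeff_X, if_neg hne, mul_zero, map_zero]

lemma OG_pd {n : ℕ} {f : A} (i : Fin 2) (hf : OG (n + 1) f) : OG n (pd i f) := by
  intro d hd
  rw [coeff_pd, hf _ (by rw [md_add, md_single]; omega), mul_zero]

/-! ## Leibniz rule for `pd` -/

lemma antidiag_swap (m : M) (F : M → M → ℂ) :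
    ∑ p ∈ (Finset.HasAntidiagonal.antidiagonal m : Finset (M × M)), F p.1 p.2
      = ∑ p ∈ (Finset.HasAntidiagonal.antidiagonal m : Finset (M × M)), F p.2 p.1 := by
  apply Finset.sum_nbij' (fun p => (p.2, p.1)) (fun p => (p.2, p.1)) <;>
    simp [Finset.HasAntidiagonal.mem_antidiagonal, add_comm]

lemma antidiag_shift (i : Fin 2) (m : M) (F G : M → ℂ) :
    ∑ p ∈ (Finset.HasAntidiagonal.antidiagonal (m + Finsupp.single i 1) : Finset (M × M)),
        (p.2 i : ℂ) * (F p.1 * G p.2)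
      = ∑ q ∈ (Finset.HasAntidiagonal.antidiagonal m : Finset (M × M)),
          ((q.2 i : ℂ) + 1) * (F q.1 * G (q.2 + Finsupp.single i 1)) := by
  rw [← Finset.sum_filter_of_ne (p := fun p => p.2 i ≠ 0)
    (by intro p _ hne h0; exact hne (by rw [h0]; simp))]
  symm
  apply Finset.sum_nbij' (fun q => (q.1, q.2 + Finsupp.single i 1))
    (fun p => (p.1, p.2 - Finsupp.single i 1))
  · intro q hq
    rw [Finset.HasAntidiagonal.mem_antidiagonal] at hq
    simp only [Finset.mem_filter, Finset.HasAntidiagonal.mem_antidiagonal]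
    refine ⟨by rw [← add_assoc, hq], by simp [Finsupp.add_apply]⟩
  · intro p hp
    simp only [Finset.mem_filter, Finset.HasAntidiagonal.mem_antidiagonal] at hp
    rw [Finset.HasAntidiagonal.mem_antidiagonal]
    have hle : Finsupp.single i 1 ≤ p.2 := by
      rw [Finsupp.single_le_iff]; omega
    have h2 : p.1 + (p.2 - Finsupp.single i 1) + Finsupp.single i 1 = m + Finsupp.single i 1 := by
      rw [add_assoc, tsub_add_cancel_of_le hle, hp.1]
    exact add_right_cancel h2
  · intro q hq
    ext <;> simp
  · intro p hp
    simp only [Finset.mem_filter, Finset.HasAntidiagonal.mem_antidiagonal] at hp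
    have hle : Finsupp.single i 1 ≤ p.2 := by
      rw [Finsupp.single_le_iff]; omega
    ext <;> simp [tsub_add_cancel_of_le hle]
  · intro q hq
    rw [Finset.HasAntidiagonal.mem_antidiagonal] at hq
    have hv : ((q.2 + Finsupp.single i 1 : M)) i = q.2 i + 1 := by
      simp [Finsupp.add_apply]
    rw [hv]
    push_cast
    ring

lemma pd_mul (i : Fin 2) (f g : A) : pd i (f * g) = f * pd i g + g * pd i f := by
  ext m
  rw [map_add, coeff_pd, coeff_mul, coeff_mul, coeff_mul, Finset.mul_sum]
  have key : ∀ p ∈ (Finset.HasAntidiagonal.antidiagonal (m + Finsupp.single i 1) : Finset (M × M)),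
      ((m i : ℕ) + 1 : ℂ) * (MvPowerSeries.coeff p.1 f * MvPowerSeries.coeff p.2 g)
        = (p.1 i : ℂ) * (MvPowerSeries.coeff p.1 f * MvPowerSeries.coeff p.2 g)
          + (p.2 i : ℂ) * (MvPowerSeries.coeff p.1 f * MvPowerSeries.coeff p.2 g) := by
    intro p hp
    rw [Finset.HasAntidiagonal.mem_antidiagonal] at hp
    have hn : p.1 i + p.2 i = m i + 1 := by
      have := DFunLike.congr_fun hp i
      simpa [Finsupp.add_apply] using this
    have hc : ((p.1 i : ℂ)) + ((p.2 i : ℂ)) = ((m i : ℕ) : ℂ) + 1 := by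
      exact_mod_cast congrArg (Nat.cast : ℕ → ℂ) hn
    rw [← add_mul, hc]
  rw [Finset.sum_congr rfl key, Finset.sum_add_distrib]
  have t2 : ∑ p ∈ (Finset.HasAntidiagonal.antidiagonal (m + Finsupp.single i 1) : Finset (M × M)),
      (p.2 i : ℂ) * (MvPowerSeries.coeff p.1 f * MvPowerSeries.coeff p.2 g)
      = ∑ q ∈ (Finset.HasAntidiagonal.antidiagonal m : Finset (M × M)),
          MvPowerSeries.coeff q.1 f * MvPowerSeries.coeff q.2 (pd i g) := by
    rw [antidiag_shift i m (fun d => MvPowerSeries.coeff d f)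
      (fun d => MvPowerSeries.coeff d g)]
    apply Finset.sum_congr rfl
    intro q _
    rw [coeff_pd]
    ring
  have t1 : ∑ p ∈ (Finset.HasAntidiagonal.antidiagonal (m + Finsupp.single i 1) : Finset (M × M)),
      (p.1 i : ℂ) * (MvPowerSeries.coeff p.1 f * MvPowerSeries.coeff p.2 g)
      = ∑ q ∈ (Finset.HasAntidiagonal.antidiagonal m : Finset (M × M)),
          MvPowerSeries.coeff q.1 g * MvPowerSeries.coeff q.2 (pd i f) := by
    rw [antidiag_swap _ (fun a b => (a i : ℂ) * (MvPowerSeries.coeff a f * MvPowerSeries.coeff b g))]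
    have step : ∑ p ∈ (Finset.HasAntidiagonal.antidiagonal (m + Finsupp.single i 1) : Finset (M × M)),
        (p.2 i : ℂ) * (MvPowerSeries.coeff p.2 f * MvPowerSeries.coeff p.1 g)
        = ∑ p ∈ (Finset.HasAntidiagonal.antidiagonal (m + Finsupp.single i 1) : Finset (M × M)),
        (p.2 i : ℂ) * ((fun d => MvPowerSeries.coeff d g) p.1 * (fun d => MvPowerSeries.coeff d f) p.2) := by
      apply Finset.sum_congr rfl
      intro p _
      ring
    rw [step, antidiag_shift i m (fun d => MvPowerSeries.coeff d g)
      (fun d => MvPowerSeries.coeff d f)]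
    apply Finset.sum_congr rfl
    intro q _
    rw [coeff_pd]
    ring
  rw [t1, t2]
  ring

/-! ## σ-dependent lemmas -/

def Del (σ : A →ₐ[ℂ] A) (i : Fin 2) : A := σ (z i) - z i

def Ef (σ : A →ₐ[ℂ] A) (f : A) : A :=
  σ f - f - Del σ 0 * pd 0 f - Del σ 1 * pd 1 f

variable {σ : A →ₐ[ℂ] A}

lemma sigma_mem_pow (hc : ContEndo ⇑σ) {n : ℕ} {f : A} (hf : f ∈ mA ^ n) : σ f ∈ mA ^ n := by
  have h1 : Ideal.map σ.toRingHom mA ≤ mA := Ideal.map_le_iff_le_comap.mpr fun x hx => hc x hx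
  have h3 : σ f ∈ Ideal.map σ.toRingHom (mA ^ n) := Ideal.mem_map_of_mem _ hf
  rw [Ideal.map_pow] at h3
  exact Ideal.pow_right_mono h1 n h3

lemma OG_sigma (hc : ContEndo ⇑σ) {n : ℕ} {f : A} (hf : OG n f) : OG n (σ f) :=
  OG_of_mem_pow (sigma_mem_pow hc (mem_pow_of_OG hf))

lemma OG_Del (hc : ContEndo ⇑σ) (i : Fin 2) : OG 1 (Del σ i) :=
  OG_one_iff.mpr (Ideal.sub_mem _ (hc _ (z_mem_mA i)) (z_mem_mA i))

lemma Ef_mul (f g : A) : Ef σ (f * g) = f * Ef σ g + g * Ef σ f + (σ f - f) * (σ g - g) := by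
  unfold Ef
  rw [map_mul, pd_mul, pd_mul]
  ring

lemma Ef_add (f g : A) : Ef σ (f + g) = Ef σ f + Ef σ g := by
  unfold Ef
  rw [map_add, pd_add, pd_add]
  ring

lemma Ef_smul (c : ℂ) (f : A) : Ef σ (c • f) = c • Ef σ f := by
  unfold Ef
  rw [map_smul, pd_smul, pd_smul]
  simp only [smul_sub, mul_smul_comm]

/-- the combined induction predicate -/
def Good (σ : A →ₐ[ℂ] A) (f : A) (a : ℕ) : Prop :=
  OG a f ∧
  (∃ v₀ v₁ : A, σ f - f = Del σ 0 * v₀ + Del σ 1 * v₁ ∧ OG (a - 1) v₀ ∧ OG (a - 1) v₁) ∧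
  (∃ u₀₀ u₀₁ u₁₁ : A,
     Ef σ f = Del σ 0 * Del σ 0 * u₀₀ + Del σ 0 * Del σ 1 * u₀₁ + Del σ 1 * Del σ 1 * u₁₁ ∧
     OG (a - 2) u₀₀ ∧ OG (a - 2) u₀₁ ∧ OG (a - 2) u₁₁)

lemma good_one : Good σ 1 0 := by
  refine ⟨fun d hd => by omega, ⟨0, 0, ?_, fun d hd => by omega, fun d hd => by omega⟩,
    ⟨0, 0, 0, ?_, fun d hd => by omega, fun d hd => by omega, fun d hd => by omega⟩⟩
  · rw [map_one]; ring
  · unfold Ef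
    rw [map_one, pd_one, pd_one]
    ring

lemma good_X (i : Fin 2) : Good σ (MvPowerSeries.X i) 1 := by
  refine ⟨OG_one_iff.mpr (z_mem_mA i), ?_, ?_⟩
  · fin_cases i
    · exact ⟨1, 0, by rw [mul_one, mul_zero, add_zero]; rfl, fun d hd => by omega,
        fun d hd => by omega⟩
    · exact ⟨0, 1, by rw [mul_one, mul_zero, zero_add]; rfl, fun d hd => by omega,
        fun d hd => by omega⟩
  · refine ⟨0, 0, 0, ?_, fun d hd => by omega, fun d hd => by omega, fun d hd => by omega⟩
    unfold Ef Del z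
    fin_cases i
    · rw [pd_X, pd_X]
      norm_num
    · rw [pd_X, pd_X]
      norm_num

lemma good_mul (hc : ContEndo ⇑σ) {f g : A} {a b : ℕ} (hf : Good σ f a) (hg : Good σ g b) :
    Good σ (f * g) (a + b) := by
  obtain ⟨hfO, ⟨v₀, v₁, hv, hv₀, hv₁⟩, ⟨u₀₀, u₀₁, u₁₁, hu, hu₀₀, hu₀₁, hu₁₁⟩⟩ := hf
  obtain ⟨hgO, ⟨w₀, w₁, hw, hw₀, hw₁⟩, ⟨s₀₀, s₀₁, s₁₁, hs, hs₀₀, hs₀₁, hs₁₁⟩⟩ := hg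
  have hDg : OG b (σ g - g) := OG_sub (OG_sigma hc hgO) hgO
  refine ⟨OG_mul hfO hgO, ?_, ?_⟩
  · refine ⟨f * w₀ + g * v₀ + v₀ * (σ g - g), f * w₁ + g * v₁ + v₁ * (σ g - g), ?_, ?_, ?_⟩
    · rw [map_mul]
      linear_combination (g + (σ g - g)) * hv + f * hw
    · exact OG_add (OG_add (OG_of_le (by omega) (OG_mul hfO hw₀))
        (OG_of_le (by omega) (OG_mul hgO hv₀)))
        (OG_of_le (by omega) (OG_mul hv₀ hDg))
    · exact OG_add (OG_add (OG_of_le (by omega) (OG_mul hfO hw₁))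
        (OG_of_le (by omega) (OG_mul hgO hv₁)))
        (OG_of_le (by omega) (OG_mul hv₁ hDg))
  · refine ⟨f * s₀₀ + g * u₀₀ + v₀ * w₀, f * s₀₁ + g * u₀₁ + v₀ * w₁ + v₁ * w₀,
      f * s₁₁ + g * u₁₁ + v₁ * w₁, ?_, ?_, ?_, ?_⟩
    · rw [Ef_mul]
      linear_combination f * hs + g * hu + (σ g - g) * hv + (Del σ 0 * v₀ + Del σ 1 * v₁) * hw
    · exact OG_add (OG_add (OG_of_le (by omega) (OG_mul hfO hs₀₀))
        (OG_of_le (by omega) (OG_mul hgO hu₀₀)))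
        (OG_of_le (by omega) (OG_mul hv₀ hw₀))
    · exact OG_add (OG_add (OG_add (OG_of_le (by omega) (OG_mul hfO hs₀₁))
        (OG_of_le (by omega) (OG_mul hgO hu₀₁)))
        (OG_of_le (by omega) (OG_mul hv₀ hw₁)))
        (OG_of_le (by omega) (OG_mul hv₁ hw₀))
    · exact OG_add (OG_add (OG_of_le (by omega) (OG_mul hfO hs₁₁))
        (OG_of_le (by omega) (OG_mul hgO hu₁₁)))
        (OG_of_le (by omega) (OG_mul hv₁ hw₁))

lemma good_pow (hc : ContEndo ⇑σ) (i : Fin 2) : ∀ k : ℕ, Good σ (MvPowerSeries.X i ^ k) k := by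
  intro k
  induction k with
  | zero => rw [pow_zero]; exact good_one
  | succ k ih =>
    rw [pow_succ]
    exact good_mul hc ih (good_X i)

lemma good_monomial (hc : ContEndo ⇑σ) (d : M) :
    Good σ (MvPowerSeries.monomial d 1) (md d) := by
  have hm : (MvPowerSeries.monomial d 1 : A)
      = MvPowerSeries.X 0 ^ (d 0) * MvPowerSeries.X 1 ^ (d 1) := by
    rw [MvPowerSeries.X_pow_eq, MvPowerSeries.X_pow_eq, MvPowerSeries.monomial_mul_monomial,
      mul_one, ← fin2_decomp]
  rw [hm]
  exact good_mul hc (good_pow hc 0 (d 0)) (good_pow hc 1 (d 1))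

/-! ## assembling infinite sums -/

def expBd (N : ℕ) : Finset M :=
  ((Finset.range (N + 1) ×ˢ Finset.range (N + 1)).image
    (fun ij => Finsupp.single 0 ij.1 + Finsupp.single 1 ij.2)).filter (fun d => md d ≤ N)

lemma mem_expBd {N : ℕ} {d : M} : d ∈ expBd N ↔ md d ≤ N := by
  unfold expBd
  rw [Finset.mem_filter]
  constructor
  · exact fun h => h.2
  · intro h
    refine ⟨Finset.mem_image.mpr ⟨(d 0, d 1), ?_, (fin2_decomp d).symm⟩, h⟩
    rw [Finset.mem_product, Finset.mem_range, Finset.mem_range]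
    unfold md at h
    constructor <;> omega

/-- partial sum of the series `∑_d (coeff d f) * w d`, enough for coefficients of degree
`md m`, where the family `w` satisfies `OG (md d - κ) (w d)`. -/
def sumF (w : M → A) (κ : ℕ) (f : A) : A :=
  fun m => ∑ d ∈ expBd (md m + κ), MvPowerSeries.coeff d f * MvPowerSeries.coeff m (w d)

lemma coeff_mul_sumF (x : A) (w : M → A) (κ : ℕ) (hw : ∀ d, OG (md d - κ) (w d)) (f : A) (m : M) :
    MvPowerSeries.coeff m (x * sumF w κ f)
      = ∑ d ∈ expBd (md m + κ), MvPowerSeries.coeff d f * MvPowerSeries.coeff m (x * w d) := by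
  rw [MvPowerSeries.coeff_mul]
  have step : ∀ p ∈ (Finset.HasAntidiagonal.antidiagonal m : Finset (M × M)),
      MvPowerSeries.coeff p.1 x * MvPowerSeries.coeff p.2 (sumF w κ f)
        = ∑ d ∈ expBd (md m + κ), MvPowerSeries.coeff p.1 x
            * (MvPowerSeries.coeff d f * MvPowerSeries.coeff p.2 (w d)) := by
    intro p hp
    rw [Finset.HasAntidiagonal.mem_antidiagonal] at hp
    have hsub : expBd (md p.2 + κ) ⊆ expBd (md m + κ) := by
      intro d hd
      rw [mem_expBd] at hd ⊢
      have : md p.2 ≤ md m := by rw [← hp, md_add]; omega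
      omega
    have hcoeff : MvPowerSeries.coeff p.2 (sumF w κ f)
        = ∑ d ∈ expBd (md m + κ), MvPowerSeries.coeff d f
            * MvPowerSeries.coeff p.2 (w d) := by
      show sumF w κ f p.2 = _
      unfold sumF
      apply Finset.sum_subset hsub
      intro d hd hnd
      rw [mem_expBd] at hd
      rw [mem_expBd, not_le] at hnd
      rw [hw d p.2 (by omega), mul_zero]
    rw [hcoeff, Finset.mul_sum]
  rw [Finset.sum_congr rfl step, Finset.sum_comm]
  apply Finset.sum_congr rfl
  intro d _
  rw [MvPowerSeries.coeff_mul, Finset.mul_sum]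
  apply Finset.sum_congr rfl
  intro p _
  ring

def truncP (N : ℕ) (f : A) : A :=
  ∑ d ∈ expBd N, (MvPowerSeries.monomial d (MvPowerSeries.coeff d f) : A)

lemma coeff_truncP (N : ℕ) (f : A) (m : M) :
    MvPowerSeries.coeff m (truncP N f) = if md m ≤ N then MvPowerSeries.coeff m f else 0 := by
  unfold truncP
  rw [map_sum]
  have : ∀ d ∈ expBd N, MvPowerSeries.coeff m (MvPowerSeries.monomial d
      (MvPowerSeries.coeff d f) : A)
      = if m = d then MvPowerSeries.coeff d f else 0 := by
    intro d _
    rw [MvPowerSeries.coeff_monomial]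
  rw [Finset.sum_congr rfl this]
  rw [Finset.sum_ite_eq (expBd N) m (fun d => MvPowerSeries.coeff d f)]
  by_cases h : md m ≤ N
  · rw [if_pos (mem_expBd.mpr h), if_pos h]
  · rw [if_neg (fun hm => h (mem_expBd.mp hm)), if_neg h]

lemma OG_sub_truncP (N : ℕ) (f : A) : OG (N + 1) (f - truncP N f) := by
  intro d hd
  rw [map_sub, coeff_truncP, if_pos (by omega), sub_self]

lemma Ef_zero : Ef σ (0 : A) = 0 := by
  have h0 : pd 0 (0 : A) = 0 := by
    ext m; simp [coeff_pd]
  have h1 : pd 1 (0 : A) = 0 := by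
    ext m; simp [coeff_pd]
  unfold Ef
  rw [map_zero, h0, h1]
  ring

lemma Ef_sum (s : Finset M) (F : M → A) : Ef σ (∑ d ∈ s, F d) = ∑ d ∈ s, Ef σ (F d) := by
  classical
  induction s using Finset.induction_on with
  | empty => simp [Ef_zero]
  | insert _ _ h ih => rw [Finset.sum_insert h, Finset.sum_insert h, Ef_add, ih]

/-- first-order substitution lemma : `σ f - f ∈ (Del 0, Del 1)`, with explicit witnesses. -/
lemma SUB1 (hc : ContEndo ⇑σ) (f : A) :
    ∃ V₀ V₁ : A, σ f - f = Del σ 0 * V₀ + Del σ 1 * V₁ := by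
  have hGm : ∀ d : M, ∃ v₀ v₁ : A, σ (MvPowerSeries.monomial d 1) - MvPowerSeries.monomial d 1
      = Del σ 0 * v₀ + Del σ 1 * v₁ ∧ OG (md d - 1) v₀ ∧ OG (md d - 1) v₁ :=
    fun d => (good_monomial hc d).2.1
  choose v₀ v₁ heq hO₀ hO₁ using hGm
  refine ⟨sumF v₀ 1 f, sumF v₁ 1 f, ?_⟩
  ext m
  rw [map_add, coeff_mul_sumF _ v₀ 1 hO₀ f m, coeff_mul_sumF _ v₁ 1 hO₁ f m,
    ← Finset.sum_add_distrib]
  set N := md m with hN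
  set P := truncP (N + 1) f with hP
  have hfPr : f = P + (f - P) := by ring
  have hr : OG (N + 2) (f - P) := OG_sub_truncP (N + 1) f
  have hσr : MvPowerSeries.coeff m (σ (f - P) - (f - P)) = 0 :=
    OG_sub (OG_sigma hc hr) hr m (by omega)
  have hsplit : MvPowerSeries.coeff m (σ f - f)
      = MvPowerSeries.coeff m (σ P - P) := by
    have : σ f - f = (σ P - P) + (σ (f - P) - (f - P)) := by
      rw [map_sub]; ring
    rw [this, map_add, hσr, add_zero]
  rw [hsplit, hP]
  unfold truncP
  rw [map_sum, ← Finset.sum_sub_distrib, map_sum]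
  apply Finset.sum_congr rfl
  intro d _
  have hmon : (MvPowerSeries.monomial d (MvPowerSeries.coeff d f) : A)
      = MvPowerSeries.coeff d f • (MvPowerSeries.monomial d 1 : A) := by
    rw [← map_smul, smul_eq_mul, mul_one]
  rw [hmon, map_smul, ← smul_sub, map_smul, smul_eq_mul, heq d, map_add]
  ring

/-- second-order substitution lemma. -/
lemma SUB2 (hc : ContEndo ⇑σ) (f : A) :
    ∃ U₀₀ U₀₁ U₁₁ : A, Ef σ f = Del σ 0 * Del σ 0 * U₀₀ + Del σ 0 * Del σ 1 * U₀₁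
      + Del σ 1 * Del σ 1 * U₁₁ := by
  have hGm : ∀ d : M, ∃ u₀₀ u₀₁ u₁₁ : A, Ef σ (MvPowerSeries.monomial d 1)
      = Del σ 0 * Del σ 0 * u₀₀ + Del σ 0 * Del σ 1 * u₀₁ + Del σ 1 * Del σ 1 * u₁₁
      ∧ OG (md d - 2) u₀₀ ∧ OG (md d - 2) u₀₁ ∧ OG (md d - 2) u₁₁ :=
    fun d => (good_monomial hc d).2.2
  choose u₀₀ u₀₁ u₁₁ heq hO₀₀ hO₀₁ hO₁₁ using hGm
  refine ⟨sumF u₀₀ 2 f, sumF u₀₁ 2 f, sumF u₁₁ 2 f, ?_⟩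
  ext m
  rw [map_add, map_add, coeff_mul_sumF _ u₀₀ 2 hO₀₀ f m, coeff_mul_sumF _ u₀₁ 2 hO₀₁ f m,
    coeff_mul_sumF _ u₁₁ 2 hO₁₁ f m, ← Finset.sum_add_distrib, ← Finset.sum_add_distrib]
  set N := md m with hN
  set P := truncP (N + 2) f with hP
  have hr : OG (N + 3) (f - P) := OG_sub_truncP (N + 2) f
  have hEr : MvPowerSeries.coeff m (Ef σ (f - P)) = 0 := by
    have h1 : OG (N + 3) (σ (f - P) - (f - P)) := OG_sub (OG_sigma hc hr) hr
    have h2 : OG (N + 3) (Del σ 0 * pd 0 (f - P)) := by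
      have := OG_mul (OG_Del hc 0) (OG_pd 0 (OG_of_le (by omega) hr : OG (N + 2 + 1) (f - P)))
      exact OG_of_le (by omega) this
    have h3 : OG (N + 3) (Del σ 1 * pd 1 (f - P)) := by
      have := OG_mul (OG_Del hc 1) (OG_pd 1 (OG_of_le (by omega) hr : OG (N + 2 + 1) (f - P)))
      exact OG_of_le (by omega) this
    exact OG_sub (OG_sub h1 h2) h3 m (by omega)
  have hsplit : MvPowerSeries.coeff m (Ef σ f) = MvPowerSeries.coeff m (Ef σ P) := by
    have hfd : f = P + (f - P) := by ring
    have : Ef σ f = Ef σ P + Ef σ (f - P) := by rw [← Ef_add, ← hfd]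
    rw [this, map_add, hEr, add_zero]
  rw [hsplit, hP]
  unfold truncP
  rw [Ef_sum, map_sum]
  apply Finset.sum_congr rfl
  intro d _
  have hmon : (MvPowerSeries.monomial d (MvPowerSeries.coeff d f) : A)
      = MvPowerSeries.coeff d f • (MvPowerSeries.monomial d 1 : A) := by
    rw [← map_smul, smul_eq_mul, mul_one]
  rw [hmon, Ef_smul, map_smul, smul_eq_mul, heq d, map_add, map_add]
  ring

end S4

open S4

/-- If `σ` is a nontrivial continuous endomorphism of `A` with decomposition `(g,h₁,h₂)`
and some prime `p ∣ g` is of type II relative to `σ`, then for every `n ≥ 1` there are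
`hₙ₁, hₙ₂` with `σⁿ zᵢ = zᵢ + g·hₙᵢ`, `hₙ₁, hₙ₂` relatively prime,
`(hₙ₁,hₙ₂) = (h₁,h₂)` and `hₙᵢ − n·hᵢ ∈ (p)·(h₁,h₂)`. -/
theorem stmt4 (σ : A →ₐ[ℂ] A) (hnt : ⇑σ ≠ id) (hc : ContEndo ⇑σ)
    (g h₁ h₂ : A) (hdec : IsDecomposition ⇑σ g h₁ h₂)
    (p : A) (hp : Prime p) (hpg : p ∣ g) (hII : IsTypeII p h₁ h₂) :
    ∀ n : ℕ, 1 ≤ n → ∃ hn1 hn2 : A,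
      (⇑σ)^[n] (z 0) = z 0 + g * hn1 ∧
      (⇑σ)^[n] (z 1) = z 1 + g * hn2 ∧
      IsRelPrime hn1 hn2 ∧
      Ideal.span {hn1, hn2} = Ideal.span {h₁, h₂} ∧
      hn1 - (n : A) * h₁ ∈ Ideal.span {p} * Ideal.span {h₁, h₂} ∧
      hn2 - (n : A) * h₂ ∈ Ideal.span {p} * Ideal.span {h₁, h₂} := by
  obtain ⟨hg0, hrel, hz0, hz1⟩ := hdec
  obtain ⟨w, hw⟩ := hpg
  obtain ⟨a, q₁, q₂, ht1, ht2⟩ := hII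
  have hD0 : Del σ 0 = g * h₁ := by unfold Del; rw [hz0]; ring
  have hD1 : Del σ 1 = g * h₂ := by unfold Del; rw [hz1]; ring
  set I : Ideal A := Ideal.span {h₁, h₂} with hI
  set PI : Ideal A := Ideal.span {p} * I with hPIdef
  have hPI_le_I : PI ≤ I := Ideal.mul_le_right
  have hh1I : h₁ ∈ I := Ideal.subset_span (by simp)
  have hh2I : h₂ ∈ I := Ideal.subset_span (by simp)
  have hpP : p ∈ Ideal.span ({p} : Set A) := Ideal.mem_span_singleton_self p
  -- every element moves by an element of (p)·(h₁,h₂)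
  have key1 : ∀ x : A, σ x - x ∈ PI := by
    intro x
    obtain ⟨V₀, V₁, hV⟩ := SUB1 hc x
    rw [hV, hD0, hD1, hw]
    have m1 : p * w * h₁ * V₀ ∈ PI := by
      have heq : p * w * h₁ * V₀ = (w * V₀) * (p * h₁) := by ring
      rw [heq]
      exact Ideal.mul_mem_left _ _ (Ideal.mul_mem_mul hpP hh1I)
    have m2 : p * w * h₂ * V₁ ∈ PI := by
      have heq : p * w * h₂ * V₁ = (w * V₁) * (p * h₂) := by ring
      rw [heq]
      exact Ideal.mul_mem_left _ _ (Ideal.mul_mem_mul hpP hh2I)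
    exact Ideal.add_mem _ m1 m2
  -- type II : σ g = g (1 + p t)
  have key2 : ∃ t : A, σ g = g + g * p * t := by
    have e0 : pd 0 g = p * pd 0 w + w * pd 0 p := by rw [hw]; exact pd_mul 0 p w
    have e1 : pd 1 g = p * pd 1 w + w * pd 1 p := by rw [hw]; exact pd_mul 1 p w
    have hZ : h₁ * pd 0 g + h₂ * pd 1 g
        = p * (a * (pd 0 p * pd 1 w - pd 1 p * pd 0 w)
            + q₁ * (p * pd 0 w + w * pd 0 p) + q₂ * (p * pd 1 w + w * pd 1 p)) := by
      rw [ht1, ht2, e0, e1]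
      ring
    obtain ⟨U₀₀, U₀₁, U₁₁, hU⟩ := SUB2 hc g
    unfold Ef at hU
    rw [hD0, hD1] at hU
    refine ⟨a * (pd 0 p * pd 1 w - pd 1 p * pd 0 w)
      + q₁ * (p * pd 0 w + w * pd 0 p) + q₂ * (p * pd 1 w + w * pd 1 p)
      + w * h₁ * h₁ * U₀₀ + w * h₁ * h₂ * U₀₁ + w * h₂ * h₂ * U₁₁, ?_⟩
    linear_combination hU + g * hZ
      + (g * h₁ * h₁ * U₀₀ + g * h₁ * h₂ * U₀₁ + g * h₂ * h₂ * U₁₁) * hw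
  obtain ⟨t, hσg⟩ := key2
  -- the induction
  have main : ∀ n : ℕ, 1 ≤ n → ∃ k1 k2 : A,
      (⇑σ)^[n] (z 0) = z 0 + g * k1 ∧ (⇑σ)^[n] (z 1) = z 1 + g * k2 ∧
      k1 - (n : A) * h₁ ∈ PI ∧ k2 - (n : A) * h₂ ∈ PI := by
    intro n hn
    induction n with
    | zero => omega
    | succ n ih =>
      by_cases hn' : 1 ≤ n
      · obtain ⟨k1, k2, e1, e2, m1, m2⟩ := ih hn'
        have hk1I : k1 ∈ I := by
          have heq : k1 = (k1 - (n : A) * h₁) + (n : A) * h₁ := by ring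
          rw [heq]
          exact Ideal.add_mem _ (hPI_le_I m1) (Ideal.mul_mem_left _ _ hh1I)
        have hk2I : k2 ∈ I := by
          have heq : k2 = (k2 - (n : A) * h₂) + (n : A) * h₂ := by ring
          rw [heq]
          exact Ideal.add_mem _ (hPI_le_I m2) (Ideal.mul_mem_left _ _ hh2I)
        have hσk1I : σ k1 ∈ I := by
          have heq : σ k1 = (σ k1 - k1) + k1 := by ring
          rw [heq]
          exact Ideal.add_mem _ (hPI_le_I (key1 k1)) hk1I
        have hσk2I : σ k2 ∈ I := by
          have heq : σ k2 = (σ k2 - k2) + k2 := by ring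
          rw [heq]
          exact Ideal.add_mem _ (hPI_le_I (key1 k2)) hk2I
        refine ⟨h₁ + (1 + p * t) * σ k1, h₂ + (1 + p * t) * σ k2, ?_, ?_, ?_, ?_⟩
        · rw [Function.iterate_succ_apply', e1, map_add, map_mul, hz0, hσg]
          ring
        · rw [Function.iterate_succ_apply', e2, map_add, map_mul, hz1, hσg]
          ring
        · have heq : h₁ + (1 + p * t) * σ k1 - ((n + 1 : ℕ) : A) * h₁
              = (σ k1 - k1) + p * (t * σ k1) + (k1 - (n : A) * h₁) := by
            push_cast
            ring
          rw [heq]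
          exact Ideal.add_mem _ (Ideal.add_mem _ (key1 k1)
            (Ideal.mul_mem_mul hpP (Ideal.mul_mem_left _ _ hσk1I))) m1
        · have heq : h₂ + (1 + p * t) * σ k2 - ((n + 1 : ℕ) : A) * h₂
              = (σ k2 - k2) + p * (t * σ k2) + (k2 - (n : A) * h₂) := by
            push_cast
            ring
          rw [heq]
          exact Ideal.add_mem _ (Ideal.add_mem _ (key1 k2)
            (Ideal.mul_mem_mul hpP (Ideal.mul_mem_left _ _ hσk2I))) m2
      · have hn0 : n = 0 := by omega
        subst hn0
        refine ⟨h₁, h₂, by rw [Function.iterate_one, hz0], by rw [Function.iterate_one, hz1],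
          ?_, ?_⟩
        · have heq : h₁ - ((1 : ℕ) : A) * h₁ = 0 := by push_cast; ring
          rw [heq]; exact Ideal.zero_mem _
        · have heq : h₂ - ((1 : ℕ) : A) * h₂ = 0 := by push_cast; ring
          rw [heq]; exact Ideal.zero_mem _
  -- packaging
  intro n hn
  obtain ⟨k1, k2, e1, e2, m1, m2⟩ := main n hn
  have hk1I : k1 ∈ I := by
    have heq : k1 = (k1 - (n : A) * h₁) + (n : A) * h₁ := by ring
    rw [heq]
    exact Ideal.add_mem _ (hPI_le_I m1) (Ideal.mul_mem_left _ _ hh1I)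
  have hk2I : k2 ∈ I := by
    have heq : k2 = (k2 - (n : A) * h₂) + (n : A) * h₂ := by ring
    rw [heq]
    exact Ideal.add_mem _ (hPI_le_I m2) (Ideal.mul_mem_left _ _ hh2I)
  have hnu : IsUnit ((n : ℕ) : A) := by
    rw [MvPowerSeries.isUnit_iff_constantCoeff]
    rw [map_natCast]
    exact isUnit_iff_ne_zero.mpr (Nat.cast_ne_zero.mpr (by omega))
  have hspan : Ideal.span {k1, k2} = I := by
    apply le_antisymm
    · rw [Ideal.span_le]
      rintro x hx
      rcases hx with hx | hx
      · rw [hx]; exact hk1I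
      · rw [Set.mem_singleton_iff] at hx; rw [hx]; exact hk2I
    · have hsup : I ≤ Ideal.span {k1, k2} ⊔ Ideal.span {p} • I := by
        rw [hI, Ideal.span_le]
        have hkey : ∀ h k : A, k ∈ Ideal.span ({k1, k2} : Set A) → k - (n : A) * h ∈ PI →
            h ∈ Ideal.span {k1, k2} ⊔ Ideal.span {p} • I := by
          intro h k hk hm
          have hnh : (n : A) * h ∈ Ideal.span {k1, k2} ⊔ Ideal.span {p} • I := by
            have heq : (n : A) * h = k - (k - (n : A) * h) := by ring
            rw [heq]
            refine Submodule.sub_mem _ (Submodule.mem_sup_left hk) (Submodule.mem_sup_right ?_)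
            rwa [smul_eq_mul, ← hPIdef]
          obtain ⟨u, hu⟩ := hnu
          have heq2 : h = ↑u⁻¹ * ((n : A) * h) := by
            rw [← hu, ← mul_assoc, Units.inv_mul, one_mul]
          rw [heq2]
          exact Ideal.mul_mem_left _ _ hnh
        rintro x hx
        rcases hx with hx | hx
        · rw [hx]
          exact hkey h₁ k1 (Ideal.subset_span (by simp)) m1
        · rw [Set.mem_singleton_iff] at hx
          rw [hx]
          exact hkey h₂ k2 (Ideal.subset_span (by simp)) m2
      have hFG : I.FG := Submodule.fg_span (Set.toFinite _)
      have hjac : Ideal.span ({p} : Set A) ≤ Ideal.jacobson ⊥ := by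
        rw [Ideal.span_le, Set.singleton_subset_iff, SetLike.mem_coe,
          IsLocalRing.jacobson_eq_maximalIdeal ⊥ bot_ne_top]
        exact hp.not_unit
      exact Submodule.le_of_le_smul_of_le_jacobson_bot hFG hjac hsup
  have hrelp : IsRelPrime k1 k2 := by
    intro u hu1 hu2
    have hdvd : ∀ x ∈ Ideal.span ({k1, k2} : Set A), u ∣ x := by
      intro x hx
      rw [Ideal.mem_span_pair] at hx
      obtain ⟨c, d, hcd⟩ := hx
      rw [← hcd]
      exact dvd_add (Dvd.dvd.mul_left hu1 c) (Dvd.dvd.mul_left hu2 d)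
    exact hrel (hdvd h₁ (by rw [hspan]; exact hh1I)) (hdvd h₂ (by rw [hspan]; exact hh2I))
  exact ⟨k1, k2, e1, e2, hrelp, hspan, m1, m2⟩

end
end

section
/- Let σ : A → A be a continuous endomorphism of A = ℂ⟦z₁,z₂⟧ of the form σ(z₁) = z₁ + z₁^k·f₁ and σ(z₂) = z₂ + z₁^l·f₂, where k, l ∈ ℕ≥1 ∪ {∞} are not both ∞ (with the convention z₁^∞·f := 0), and where fᵢ ∉ (z₁) (i.e., fᵢ(0,z₂) ≠ 0 in ℂ⟦z₂⟧) whenever the corresponding exponent is finite. Then for any decomposition (g,h₁,h₂) of σ one has max{ m ∈ ℕ : g ∈ (z₁)^m } = min{k,l}, and the prime element z₁ is of type II relative to σ if and only if k > l. -/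
noncomputable section

/-- `z₁^k·f` with exponent `k ∈ ℕ∞`, with the convention `z₁^∞·f = 0`. -/
def xpow (k : ℕ∞) (f : A) : A := if k = ⊤ then 0 else (z 0) ^ k.toNat * f

namespace Stmt9Aux

open MvPowerSeries

lemma zne : (z 0 : A) ≠ 0 := by
  intro h
  have := congrArg (MvPowerSeries.coeff (Finsupp.single 0 1)) h
  rw [z, MvPowerSeries.coeff_index_single_self_X] at this
  simp at this

lemma znu : ¬ IsUnit (z 0 : A) := by
  intro h
  have := h.map (MvPowerSeries.constantCoeff : A →+* ℂ)
  rw [z, MvPowerSeries.constantCoeff_X] at this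
  exact not_isUnit_zero this

lemma single1_of_fst_zero (m : Fin 2 →₀ ℕ) (hm : m 0 = 0) : m = Finsupp.single 1 (m 1) := by
  ext i
  fin_cases i
  · simpa using hm
  · simp

/-- The restriction ring hom `f(z₁,z₂) ↦ f(0,z₂)`. -/
def rA : A →+* PowerSeries ℂ where
  toFun f := PowerSeries.mk fun n => MvPowerSeries.coeff (Finsupp.single 1 n) f
  map_one' := by
    ext n
    simp [MvPowerSeries.coeff_one, PowerSeries.coeff_one, Finsupp.single_eq_zero]
  map_mul' f g := by
    ext n
    rw [PowerSeries.coeff_mk, PowerSeries.coeff_mul, MvPowerSeries.coeff_mul,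
      Finsupp.antidiagonal_single, Finset.sum_map]
    simp
  map_zero' := by ext n; simp
  map_add' f g := by ext n; simp

lemma X_dvd_iff_rA (f : A) : z 0 ∣ f ↔ rA f = 0 := by
  rw [z, MvPowerSeries.X_dvd_iff]
  constructor
  · intro h
    ext n
    simpa [rA] using h (Finsupp.single 1 n) (by simp)
  · intro h m hm
    have h2 := congrArg (PowerSeries.coeff (m 1)) h
    simp only [rA, RingHom.coe_mk, MonoidHom.coe_mk, OneHom.coe_mk, PowerSeries.coeff_mk,
      map_zero] at h2
    rwa [single1_of_fst_zero m hm]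

lemma X_prime : Prime (z 0 : A) := by
  refine ⟨zne, znu, ?_⟩
  intro a b h
  rw [X_dvd_iff_rA] at h
  rw [map_mul] at h
  rcases mul_eq_zero.mp h with h' | h'
  · exact Or.inl ((X_dvd_iff_rA a).mpr h')
  · exact Or.inr ((X_dvd_iff_rA b).mpr h')

lemma cancel (t : ℕ) (f : A) (h : (z 0) ^ (t + 1) ∣ (z 0) ^ t * f) : z 0 ∣ f := by
  obtain ⟨c, hc⟩ := h
  refine ⟨c, mul_left_cancel₀ (pow_ne_zero t zne) ?_⟩
  rw [hc]; ring

lemma bounded (x : A) (hx : x ≠ 0) : ∃ N, ¬ (z 0) ^ N ∣ x := by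
  have : ∃ m, MvPowerSeries.coeff m x ≠ 0 := by
    by_contra h
    push_neg at h
    exact hx (MvPowerSeries.ext fun m => by simpa using h m)
  obtain ⟨m, hm⟩ := this
  refine ⟨m 0 + 1, fun hd => hm ?_⟩
  rw [z] at hd
  exact MvPowerSeries.X_pow_dvd_iff.mp hd m (Nat.lt_succ_self _)

lemma exists_exact (x : A) (hx : x ≠ 0) :
    ∃ n, (z 0) ^ n ∣ x ∧ ¬ (z 0) ^ (n + 1) ∣ x := by
  classical
  obtain ⟨N, hN⟩ := bounded x hx
  have hP : ∃ n, ¬ (z 0) ^ n ∣ x := ⟨N, hN⟩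
  have hpos : 0 < Nat.find hP := by
    rcases Nat.eq_zero_or_pos (Nat.find hP) with h | h
    · exact absurd (h ▸ Nat.find_spec hP) (by simp [pow_zero])
    · exact h
  refine ⟨Nat.find hP - 1, ?_, ?_⟩
  · have := Nat.find_min hP (Nat.sub_lt hpos one_pos)
    exact not_not.mp this
  · rw [Nat.sub_add_cancel hpos]
    exact Nat.find_spec hP

lemma multOrd_eq {x : A} {n : ℕ} (hd : (z 0) ^ n ∣ x) (hnd : ¬ (z 0) ^ (n + 1) ∣ x) :
    multOrd (z 0) x = n := by
  have hset : {m : ℕ | x ∈ Ideal.span {z 0} ^ m} = Set.Iic n := by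
    ext m
    simp only [Set.mem_setOf_eq, Ideal.span_singleton_pow, Ideal.mem_span_singleton,
      Set.mem_Iic]
    constructor
    · intro h
      by_contra hm
      push_neg at hm
      exact hnd (dvd_trans (pow_dvd_pow _ hm) h)
    · intro hm
      exact dvd_trans (pow_dvd_pow _ hm) hd
  rw [multOrd, hset, csSup_Iic]

lemma dvd_iff_one_le (x : A) (hx : x ≠ 0) : z 0 ∣ x ↔ 1 ≤ multOrd (z 0) x := by
  obtain ⟨n, h1, h2⟩ := exists_exact x hx
  rw [multOrd_eq h1 h2]
  constructor
  · intro hd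
    rcases Nat.eq_zero_or_pos n with rfl | h
    · exact absurd hd (by simpa using h2)
    · exact h
  · intro hn
    exact dvd_trans (dvd_pow_self _ (Nat.one_le_iff_ne_zero.mp hn)) h1

lemma multOrd_pow_mul (t : ℕ) (f : A) (hf : ¬ z 0 ∣ f) :
    multOrd (z 0) ((z 0) ^ t * f) = t :=
  multOrd_eq ⟨f, rfl⟩ (fun h => hf (cancel t f h))

lemma multOrd_unit_mul (t : ℕ) (f h g : A) (hf : ¬ z 0 ∣ f) (hh : IsUnit h)
    (hgh : g * h = (z 0) ^ t * f) : multOrd (z 0) g = t := by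
  obtain ⟨v, rfl⟩ := hh
  apply multOrd_eq
  · refine ⟨f * ↑v⁻¹, ?_⟩
    have hg : g = (g * ↑v) * ↑v⁻¹ := by
      rw [mul_assoc, Units.mul_inv, mul_one]
    rw [hg, hgh, mul_assoc]
  · intro hdvd
    apply hf
    apply cancel t f
    rw [← hgh]
    exact hdvd.mul_right _

lemma multOrd_mul (x y : A) (hx : x ≠ 0) (hy : y ≠ 0) :
    multOrd (z 0) (x * y) = multOrd (z 0) x + multOrd (z 0) y := by
  obtain ⟨a, ⟨x', hx'⟩, ha2⟩ := exists_exact x hx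
  obtain ⟨b, ⟨y', hy'⟩, hb2⟩ := exists_exact y hy
  have hxd : ¬ z 0 ∣ x' := by
    rintro ⟨c, rfl⟩
    exact ha2 ⟨c, by rw [hx']; ring⟩
  have hyd : ¬ z 0 ∣ y' := by
    rintro ⟨c, rfl⟩
    exact hb2 ⟨c, by rw [hy']; ring⟩
  have hxyd : ¬ z 0 ∣ x' * y' := by
    intro h
    rcases X_prime.2.2 _ _ h with h | h
    · exact hxd h
    · exact hyd h
  have key : x * y = (z 0) ^ (a + b) * (x' * y') := by
    rw [hx', hy']; ring
  rw [multOrd_eq (⟨x', hx'⟩ : (z 0)^a ∣ x) ha2, multOrd_eq (⟨y', hy'⟩ : (z 0)^b ∣ y) hb2,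
    key, multOrd_pow_mul _ _ hxyd]

lemma pd1_z0 : pd 1 (z 0) = (0 : A) := by
  apply MvPowerSeries.ext
  intro m
  rw [MvPowerSeries.coeff_apply]
  show ((m 1 : ℕ) + 1 : ℂ) * MvPowerSeries.coeff (m + Finsupp.single 1 1) (z 0) = _
  have : MvPowerSeries.coeff (m + Finsupp.single 1 1) (z 0) = 0 := by
    rw [z, MvPowerSeries.coeff_X, if_neg]
    · intro h
      have := DFunLike.congr_fun h 1
      simp [Finsupp.single_eq_of_ne (by decide : (0 : Fin 2) ≠ 1)] at this
  rw [this, mul_zero]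
  simp

lemma pd0_z0 : pd 0 (z 0) = (1 : A) := by
  apply MvPowerSeries.ext
  intro m
  rw [MvPowerSeries.coeff_apply]
  show ((m 0 : ℕ) + 1 : ℂ) * MvPowerSeries.coeff (m + Finsupp.single 0 1) (z 0) = _
  rw [z, MvPowerSeries.coeff_X, MvPowerSeries.coeff_one]
  by_cases hm : m = 0
  · subst hm
    simp
  · rw [if_neg, if_neg hm, mul_zero]
    intro h
    exact hm (by simpa using add_right_cancel (h.trans (zero_add (Finsupp.single 0 1)).symm))

lemma typeII_iff (h₁ h₂ : A) : IsTypeII (z 0) h₁ h₂ ↔ z 0 ∣ h₁ := by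
  constructor
  · rintro ⟨a, q₁, q₂, e1, _⟩
    rw [pd1_z0] at e1
    exact ⟨q₁, by simpa using e1⟩
  · rintro ⟨c, rfl⟩
    exact ⟨h₂, c, 0, by simp [pd1_z0], by simp [pd0_z0]⟩

end Stmt9Aux

open Stmt9Aux in
/-- If `σ(z₁) = z₁ + z₁^k·f₁`, `σ(z₂) = z₂ + z₁^l·f₂` with `k, l ∈ ℕ≥1 ∪ {∞}` not both `∞`
and `fᵢ ∉ (z₁)` when the exponent is finite, then for any decomposition `(g,h₁,h₂)` of `σ`
one has `max{m : g ∈ (z₁)^m} = min{k,l}`, and `z₁` is of type II relative to `σ` iff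
`k > l`. -/
theorem stmt9 (σ : A →ₐ[ℂ] A) (hc : ContEndo ⇑σ)
    (k l : ℕ∞) (hk : 1 ≤ k) (hl : 1 ≤ l) (hkl : ¬(k = ⊤ ∧ l = ⊤))
    (f₁ f₂ : A)
    (hf₁ : k ≠ ⊤ → f₁ ∉ Ideal.span {z 0})
    (hf₂ : l ≠ ⊤ → f₂ ∉ Ideal.span {z 0})
    (h1 : σ (z 0) = z 0 + xpow k f₁)
    (h2 : σ (z 1) = z 1 + xpow l f₂) :
    ∀ g h₁ h₂ : A, IsDecomposition ⇑σ g h₁ h₂ →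
      (multOrd (z 0) g : ℕ∞) = min k l ∧ (IsTypeII (z 0) h₁ h₂ ↔ l < k) := by
  rintro g h₁ h₂ ⟨hg, hrel, hd1, hd2⟩
  have hg1 : g * h₁ = xpow k f₁ := add_left_cancel (hd1.symm.trans h1)
  have hg2 : g * h₂ = xpow l f₂ := add_left_cancel (hd2.symm.trans h2)
  rw [typeII_iff]
  rcases eq_or_ne l ⊤ with hlT | hlT
  · -- l = ⊤ : h₂ = 0, h₁ unit
    have hkT : k ≠ ⊤ := fun h => hkl ⟨h, hlT⟩
    have hh2 : h₂ = 0 := by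
      have : g * h₂ = 0 := by rw [hg2, xpow, if_pos hlT]
      rcases mul_eq_zero.mp this with h | h
      · exact absurd h hg
      · exact h
    have hu : IsUnit h₁ := hrel dvd_rfl (by simp [hh2])
    have hf1 : ¬ z 0 ∣ f₁ := fun hd => hf₁ hkT (Ideal.mem_span_singleton.mpr hd)
    have hx : g * h₁ = (z 0) ^ k.toNat * f₁ := by rw [hg1, xpow, if_neg hkT]
    have hmo : multOrd (z 0) g = k.toNat := multOrd_unit_mul _ _ _ _ hf1 hu hx
    constructor
    · rw [hmo, ENat.coe_toNat hkT, hlT, min_eq_left le_top]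
    · constructor
      · intro hd
        exact absurd (isUnit_of_dvd_unit hd hu) znu
      · intro hlt
        rw [hlT] at hlt
        exact absurd hlt (not_top_lt)
  · rcases eq_or_ne k ⊤ with hkT | hkT
    · -- k = ⊤ : h₁ = 0, h₂ unit
      have hh1 : h₁ = 0 := by
        have : g * h₁ = 0 := by rw [hg1, xpow, if_pos hkT]
        rcases mul_eq_zero.mp this with h | h
        · exact absurd h hg
        · exact h
      have hu : IsUnit h₂ := hrel (by simp [hh1]) dvd_rfl
      have hf2 : ¬ z 0 ∣ f₂ := fun hd => hf₂ hlT (Ideal.mem_span_singleton.mpr hd)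
      have hx : g * h₂ = (z 0) ^ l.toNat * f₂ := by rw [hg2, xpow, if_neg hlT]
      have hmo : multOrd (z 0) g = l.toNat := multOrd_unit_mul _ _ _ _ hf2 hu hx
      constructor
      · rw [hmo, ENat.coe_toNat hlT, hkT, min_eq_right le_top]
      · constructor
        · intro _
          rw [hkT]
          exact Ne.lt_top hlT
        · intro _
          rw [hh1]
          exact dvd_zero _
    · -- both finite
      have hf1 : ¬ z 0 ∣ f₁ := fun hd => hf₁ hkT (Ideal.mem_span_singleton.mpr hd)
      have hf2 : ¬ z 0 ∣ f₂ := fun hd => hf₂ hlT (Ideal.mem_span_singleton.mpr hd)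
      have hf1z : f₁ ≠ 0 := fun h => hf1 (h ▸ dvd_zero _)
      have hf2z : f₂ ≠ 0 := fun h => hf2 (h ▸ dvd_zero _)
      have hx1 : g * h₁ = (z 0) ^ k.toNat * f₁ := by rw [hg1, xpow, if_neg hkT]
      have hx2 : g * h₂ = (z 0) ^ l.toNat * f₂ := by rw [hg2, xpow, if_neg hlT]
      have hh1z : h₁ ≠ 0 := by
        intro h
        apply mul_ne_zero (pow_ne_zero _ zne) hf1z
        rw [← hx1, h, mul_zero]
      have hh2z : h₂ ≠ 0 := by
        intro h
        apply mul_ne_zero (pow_ne_zero _ zne) hf2z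
        rw [← hx2, h, mul_zero]
      have hab : multOrd (z 0) g + multOrd (z 0) h₁ = k.toNat := by
        rw [← multOrd_mul g h₁ hg hh1z, hx1, multOrd_pow_mul _ _ hf1]
      have hac : multOrd (z 0) g + multOrd (z 0) h₂ = l.toNat := by
        rw [← multOrd_mul g h₂ hg hh2z, hx2, multOrd_pow_mul _ _ hf2]
      have hbc : multOrd (z 0) h₁ = 0 ∨ multOrd (z 0) h₂ = 0 := by
        by_contra h
        push_neg at h
        have d1 : z 0 ∣ h₁ := (dvd_iff_one_le h₁ hh1z).mpr (Nat.one_le_iff_ne_zero.mpr h.1)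
        have d2 : z 0 ∣ h₂ := (dvd_iff_one_le h₂ hh2z).mpr (Nat.one_le_iff_ne_zero.mpr h.2)
        exact znu (hrel d1 d2)
      constructor
      · have hmin : multOrd (z 0) g = min k.toNat l.toNat := by omega
        rw [hmin]
        rcases le_total k.toNat l.toNat with h | h
        · rw [min_eq_left h, min_eq_left, ENat.coe_toNat hkT]
          rw [← ENat.coe_toNat hkT, ← ENat.coe_toNat hlT]
          exact_mod_cast h
        · rw [min_eq_right h, min_eq_right, ENat.coe_toNat hlT]
          rw [← ENat.coe_toNat hkT, ← ENat.coe_toNat hlT]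
          exact_mod_cast h
      · rw [dvd_iff_one_le h₁ hh1z]
        rw [← ENat.coe_toNat hkT, ← ENat.coe_toNat hlT, Nat.cast_lt]
        omega

end
end
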